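/- Let λ^L, λ^R, μ^L, μ^R be partitions with |λ^L| = r − t, |λ^R| = s − t, |μ^L| = r − t', |μ^R| = s − t' for some 0 ≤ t, t' ≤ min(r,s), with r, s ≥ 1, and let δ ∈ ℂ with |δ| > r + s − 2. If ∏_{u∈[λ^L]} (1 + c(u) z) / ∏_{u∈[λ^R]} (1 − (c(u)+δ) z) = ∏_{u∈[μ^L]} (1 + c(u) z) / ∏_{u∈[μ^R]} (1 − (c(u)+δ) z) as rational functions in z, then t = t', λ^L = μ^L, and λ^R = μ^R. -/

import Mathlib

open Polynomial Multiset

noncomputable section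

namespace YDaux

def ctZ (c : ℕ × ℕ) : ℤ := (c.2 : ℤ) - c.1

def contents (l : YoungDiagram) : Multiset ℤ := l.cells.val.map ctZ

def cellOn (k : ℤ) (m : ℕ) : ℕ × ℕ := (m + (-k).toNat, m + k.toNat)

lemma content_cellOn (k : ℤ) (m : ℕ) : ctZ (cellOn k m) = k := by
  simp only [cellOn, ctZ]
  push_cast
  omega

lemma min_cellOn (k : ℤ) (m : ℕ) : min (cellOn k m).1 (cellOn k m).2 = m := by
  simp only [cellOn]
  omega

lemma cellOn_eq (k : ℤ) (a b : ℕ) (h : (b : ℤ) - a = k) : cellOn k (min a b) = (a, b) := by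
  simp only [cellOn, Prod.ext_iff]
  omega

/-- diagonal count -/
def dc (l : YoungDiagram) (k : ℤ) : ℕ := Multiset.count k (contents l)

lemma dc_eq_card_filter (l : YoungDiagram) (k : ℤ) :
    dc l k = (l.cells.filter (fun c => ctZ c = k)).card := by
  classical
  rw [dc, contents, Multiset.count_map]
  have : Multiset.filter (fun a : ℕ × ℕ => k = ctZ a) l.cells.val =
      Multiset.filter (fun c : ℕ × ℕ => ctZ c = k) l.cells.val :=
    Multiset.filter_congr (fun x _ => ⟨Eq.symm, Eq.symm⟩)
  rw [this]
  rfl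

lemma mem_iff_min_lt_dc (l : YoungDiagram) (a b : ℕ) :
    (a, b) ∈ l ↔ min a b < dc l ((b : ℤ) - a) := by
  classical
  set k : ℤ := (b : ℤ) - a with hk
  set S : Finset (ℕ × ℕ) := l.cells.filter (fun c => ctZ c = k) with hS
  have hminj : Set.InjOn (fun c : ℕ × ℕ => min c.1 c.2) S := by
    intro x hx y hy hxy
    simp only [hS, Finset.mem_coe, Finset.mem_filter] at hx hy
    have hx2 : cellOn k (min x.1 x.2) = x := (cellOn_eq k x.1 x.2 hx.2).trans (Prod.mk.eta)
    have hy2 : cellOn k (min y.1 y.2) = y := (cellOn_eq k y.1 y.2 hy.2).trans (Prod.mk.eta)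
    simp only at hxy
    rw [← hx2, ← hy2, hxy]
  set T : Finset ℕ := S.image (fun c => min c.1 c.2) with hT
  have hTcard : T.card = dc l k := by
    rw [hT, Finset.card_image_of_injOn hminj, dc_eq_card_filter]
  have hTmem : ∀ m, m ∈ T ↔ cellOn k m ∈ l := by
    intro m
    constructor
    · intro hm
      rw [hT, Finset.mem_image] at hm
      obtain ⟨c, hc, hcm⟩ := hm
      rw [hS, Finset.mem_filter] at hc
      rw [← hcm, (cellOn_eq k c.1 c.2 hc.2).trans (Prod.mk.eta)]
      exact (YoungDiagram.mem_cells _).mp hc.1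
    · intro hm
      rw [hT, Finset.mem_image]
      refine ⟨cellOn k m, ?_, min_cellOn k m⟩
      rw [hS, Finset.mem_filter]
      exact ⟨(YoungDiagram.mem_cells _).mpr hm, content_cellOn k m⟩
  have hdown : ∀ m j, m ∈ T → j ≤ m → j ∈ T := by
    intro m j hm hj
    rw [hTmem] at hm ⊢
    refine l.up_left_mem ?_ ?_ hm <;> simp [cellOn] <;> omega
  have hTrange : ∀ m, m ∈ T ↔ m < T.card := by
    intro m
    constructor
    · intro hm
      by_contra h
      push_neg at h
      have hsub : Finset.range (m + 1) ⊆ T := by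
        intro j hj
        rw [Finset.mem_range] at hj
        exact hdown m j hm (by omega)
      have := Finset.card_le_card hsub
      simp at this
      omega
    · intro hm
      by_contra h
      have hsub : T ⊆ Finset.range m := by
        intro j hj
        rw [Finset.mem_range]
        by_contra hjm
        push_neg at hjm
        exact h (hdown j m hj hjm)
      have := Finset.card_le_card hsub
      simp at this
      omega
  have hfin : (a, b) ∈ l ↔ min a b ∈ T := by
    rw [hTmem, cellOn_eq k a b hk.symm]
  rw [hfin, hTrange, hTcard]

lemma eq_of_contents_eq {l m : YoungDiagram} (h : contents l = contents m) : l = m := by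
  ext ⟨a, b⟩
  rw [YoungDiagram.mem_cells, YoungDiagram.mem_cells, mem_iff_min_lt_dc, mem_iff_min_lt_dc,
    dc, dc, h]

lemma cell_lt {l : YoungDiagram} {a b : ℕ} (h : (a, b) ∈ l.cells) :
    a < l.cells.card ∧ b < l.cells.card := by
  constructor
  · have hsub : (Finset.range (a + 1)).image (fun i => (i, b)) ⊆ l.cells := by
      intro x hx
      simp only [Finset.mem_image, Finset.mem_range] at hx
      obtain ⟨i, hi, rfl⟩ := hx
      exact (YoungDiagram.mem_cells _).mpr
        (l.up_left_mem (by omega) (le_refl b) ((YoungDiagram.mem_cells _).mp h))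
    have hinj : Function.Injective (fun i : ℕ => (i, b)) := fun x y hxy => by
      simpa using hxy
    have := Finset.card_le_card hsub
    rw [Finset.card_image_of_injective _ hinj, Finset.card_range] at this
    omega
  · have hsub : (Finset.range (b + 1)).image (fun j => (a, j)) ⊆ l.cells := by
      intro x hx
      simp only [Finset.mem_image, Finset.mem_range] at hx
      obtain ⟨j, hj, rfl⟩ := hx
      exact (YoungDiagram.mem_cells _).mpr
        (l.up_left_mem (le_refl a) (by omega) ((YoungDiagram.mem_cells _).mp h))
    have hinj : Function.Injective (fun j : ℕ => (a, j)) := fun x y hxy => by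
      simpa using hxy
    have := Finset.card_le_card hsub
    rw [Finset.card_image_of_injective _ hinj, Finset.card_range] at this
    omega

lemma abs_ct_le {l : YoungDiagram} {n : ℕ} (hcard : l.cells.card ≤ n)
    {u : ℕ × ℕ} (hu : u ∈ l.cells) :
    ‖((ctZ u : ℂ))‖ ≤ (n : ℝ) - 1 := by
  obtain ⟨ha, hb⟩ := cell_lt (show (u.1, u.2) ∈ l.cells by simpa using hu)
  have h1 : |ctZ u| ≤ (n : ℤ) - 1 := by
    rw [abs_le]
    simp only [ctZ]
    omega
  have h2 : ‖((ctZ u : ℂ))‖ = |((ctZ u : ℤ) : ℝ)| := by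
    exact Complex.norm_intCast _
  rw [h2, ← Int.cast_abs]
  calc ((|ctZ u| : ℤ) : ℝ) ≤ (((n : ℤ) - 1 : ℤ) : ℝ) := by exact_mod_cast h1
    _ = (n : ℝ) - 1 := by push_cast; ring

lemma one_add_ne (a : ℂ) : (1 + C a * X : ℂ[X]) ≠ 0 := by
  intro h
  have := congrArg (fun p : ℂ[X] => p.coeff 0) h
  simp at this

lemma one_sub_ne (a : ℂ) : (1 - C a * X : ℂ[X]) ≠ 0 := by
  intro h
  have := congrArg (fun p : ℂ[X] => p.coeff 0) h
  simp at this

lemma roots_linear (u v : ℂ) (h : v ≠ 0) :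
    (C u + C v * X : ℂ[X]).roots = {-(u / v)} := by
  have h2 : v * (u / v) = u := by field_simp
  have key : C v * (X - C (-(u / v))) = C u + C v * X := by
    rw [mul_sub, ← C_mul, mul_neg, h2, C_neg, sub_neg_eq_add, add_comm]
  rw [← key, roots_C_mul _ h, roots_X_sub_C]

lemma roots_one_add (a : ℂ) :
    (1 + C a * X : ℂ[X]).roots = if a = 0 then 0 else {-a⁻¹} := by
  by_cases h : a = 0
  · simp [h]
  · rw [if_neg h, ← C_1, roots_linear 1 a h, one_div]

lemma roots_one_sub (a : ℂ) (h : a ≠ 0) :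
    (1 - C a * X : ℂ[X]).roots = {a⁻¹} := by
  have h0 : (1 - C a * X : ℂ[X]) = C 1 + C (-a) * X := by
    rw [C_neg, C_1, neg_mul, sub_eq_add_neg]
  rw [h0, roots_linear 1 (-a) (neg_ne_zero.mpr h), div_neg, one_div, neg_neg]

lemma bind_if_eq_map_filter {α β : Type*} (s : Multiset α) (g : α → ℤ) (h : ℤ → β) :
    s.bind (fun u => if g u = 0 then 0 else {h (g u)}) =
      ((s.map g).filter (· ≠ 0)).map h := by
  classical
  induction s using Multiset.induction with
  | empty => simp
  | cons a s ih =>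
    by_cases hg : g a = 0 <;>
      simp [Multiset.filter_cons, hg, ih]

lemma count_add_filter_card (s : Multiset ℤ) :
    Multiset.count 0 s + Multiset.card (s.filter (· ≠ 0)) = Multiset.card s := by
  classical
  induction s using Multiset.induction with
  | empty => simp
  | cons a s ih =>
    simp only [ne_eq] at ih ⊢
    by_cases h : a = 0
    · subst h
      simp [Multiset.count_cons, Multiset.filter_cons]
      omega
    · simp [Multiset.count_cons, Multiset.filter_cons, h, Ne.symm h]
      omega

lemma abs_add_ge (x y : ℂ) : ‖y‖ - ‖x‖ ≤ ‖x + y‖ := by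
  have h := norm_add_le (x + y) (-x)
  have h2 : (x + y) + (-x) = y := by ring
  rw [h2, norm_neg] at h
  linarith

lemma rootsPA (l : YoungDiagram) :
    (∏ c ∈ l.cells, (1 + C ((ctZ c : ℤ) : ℂ) * X : ℂ[X])).roots =
      l.cells.val.bind (fun u => if ctZ u = 0 then (0 : Multiset ℂ)
        else {-((ctZ u : ℂ))⁻¹}) := by
  classical
  rw [roots_prod _ _ (Finset.prod_ne_zero_iff.mpr fun c _ => one_add_ne _)]
  refine Multiset.bind_congr fun u _ => ?_
  rw [roots_one_add]
  simp [Int.cast_eq_zero]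

lemma rootsPD (δ : ℂ) (l : YoungDiagram) (hne : ∀ u ∈ l.cells, ((ctZ u : ℂ)) + δ ≠ 0) :
    (∏ c ∈ l.cells, (1 - C ((ctZ c : ℂ) + δ) * X : ℂ[X])).roots =
      l.cells.val.map (fun u => ((ctZ u : ℂ) + δ)⁻¹) := by
  classical
  rw [roots_prod _ _ (Finset.prod_ne_zero_iff.mpr fun c _ => one_sub_ne _)]
  refine (Multiset.bind_congr fun u hu => ?_).trans (Multiset.bind_singleton _ _)
  rw [roots_one_sub _ (hne u hu)]

lemma mapback_A (l : YoungDiagram) :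
    ((∏ c ∈ l.cells, (1 + C ((ctZ c : ℤ) : ℂ) * X : ℂ[X])).roots).map (fun ρ => -ρ⁻¹) =
      ((contents l).filter (· ≠ 0)).map (fun k : ℤ => (k : ℂ)) := by
  classical
  rw [rootsPA, Multiset.map_bind]
  rw [show (fun u => Multiset.map (fun ρ : ℂ => -ρ⁻¹)
        (if ctZ u = 0 then (0 : Multiset ℂ) else {-((ctZ u : ℂ))⁻¹})) =
      (fun u => if ctZ u = 0 then (0 : Multiset ℂ) else {((ctZ u : ℤ) : ℂ)}) from
    funext fun u => by split_ifs <;> simp [inv_neg]]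
  exact bind_if_eq_map_filter l.cells.val ctZ (fun k : ℤ => (k : ℂ))

lemma mapback_D (δ : ℂ) (l : YoungDiagram) (hne : ∀ u ∈ l.cells, ((ctZ u : ℂ)) + δ ≠ 0) :
    ((∏ c ∈ l.cells, (1 - C ((ctZ c : ℂ) + δ) * X : ℂ[X])).roots).map (fun ρ => ρ⁻¹ - δ) =
      (contents l).map (fun k : ℤ => (k : ℂ)) := by
  classical
  rw [rootsPD δ l hne, Multiset.map_map, contents, Multiset.map_map]
  refine Multiset.map_congr rfl fun u _ => ?_
  simp

end YDaux

end

open YDaux Polynomial Multiset in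
/-- Let `λᴸ, λᴿ, μᴸ, μᴿ` be partitions (Young diagrams) with `|λᴸ| = r − t`, `|λᴿ| = s − t`,
`|μᴸ| = r − t'`, `|μᴿ| = s − t'` for some `0 ≤ t, t' ≤ min(r,s)`, with `r, s ≥ 1`, and let
`δ ∈ ℂ` with `|δ| > r + s − 2`. If the rational functions
`∏_{u∈[λᴸ]} (1 + c(u) z) / ∏_{u∈[λᴿ]} (1 − (c(u)+δ) z)` for `λ` and `μ` coincide,
then `t = t'`, `λᴸ = μᴸ` and `λᴿ = μᴿ`. (The content of the cell in row `a`, column `b`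
is `b − a`.) -/
theorem youngDiagram_pairs_eq_of_ratFunc_eq_of_large_delta
    (r s t t' : ℕ) (hr : 1 ≤ r) (hs : 1 ≤ s) (ht : t ≤ min r s) (ht' : t' ≤ min r s)
    (lL lR mL mR : YoungDiagram)
    (hlL : lL.cells.card = r - t) (hlR : lR.cells.card = s - t)
    (hmL : mL.cells.card = r - t') (hmR : mR.cells.card = s - t')
    (δ : ℂ) (hδ : ((r : ℝ) + (s : ℝ) - 2) < ‖δ‖)
    (heq :
      (∏ c ∈ lL.cells, (1 + RatFunc.C (((c.2 : ℤ) - (c.1 : ℤ) : ℤ) : ℂ) * RatFunc.X)) /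
          (∏ c ∈ lR.cells,
            (1 - RatFunc.C ((((c.2 : ℤ) - (c.1 : ℤ) : ℤ) : ℂ) + δ) * RatFunc.X)) =
        (∏ c ∈ mL.cells, (1 + RatFunc.C (((c.2 : ℤ) - (c.1 : ℤ) : ℤ) : ℂ) * RatFunc.X)) /
          (∏ c ∈ mR.cells,
            (1 - RatFunc.C ((((c.2 : ℤ) - (c.1 : ℤ) : ℤ) : ℂ) + δ) * RatFunc.X))) :
    t = t' ∧ lL = mL ∧ lR = mR := by
  classical
  have hcLl : lL.cells.card ≤ r := by omega
  have hcLm : mL.cells.card ≤ r := by omega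
  have hcRl : lR.cells.card ≤ s := by omega
  have hcRm : mR.cells.card ≤ s := by omega
  have habsR : ∀ {l : YoungDiagram}, l.cells.card ≤ s → ∀ u ∈ l.cells,
      ((r : ℝ) - 1) < ‖(ctZ u : ℂ) + δ‖ := by
    intro l hc u hu
    have h1 : ‖((ctZ u : ℂ))‖ ≤ (s : ℝ) - 1 := abs_ct_le hc hu
    have h2 := abs_add_ge ((ctZ u : ℂ)) δ
    linarith
  have hneR : ∀ {l : YoungDiagram}, l.cells.card ≤ s → ∀ u ∈ l.cells,
      ((ctZ u : ℂ)) + δ ≠ 0 := by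
    intro l hc u hu h0
    have h3 := habsR hc u hu
    rw [h0] at h3
    simp at h3
    have h4 : (1 : ℝ) ≤ r := by exact_mod_cast hr
    linarith
  have hAne : ∀ l : YoungDiagram,
      (∏ c ∈ l.cells, (1 + C ((ctZ c : ℤ) : ℂ) * X : ℂ[X])) ≠ 0 :=
    fun l => Finset.prod_ne_zero_iff.mpr fun c _ => one_add_ne _
  have hDne : ∀ l : YoungDiagram,
      (∏ c ∈ l.cells, (1 - C ((ctZ c : ℂ) + δ) * X : ℂ[X])) ≠ 0 :=
    fun l => Finset.prod_ne_zero_iff.mpr fun c _ => one_sub_ne _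
  have hinj : Function.Injective (algebraMap ℂ[X] (RatFunc ℂ)) :=
    IsFractionRing.injective ℂ[X] (RatFunc ℂ)
  have hφA : ∀ l : YoungDiagram,
      (algebraMap ℂ[X] (RatFunc ℂ)) (∏ c ∈ l.cells, (1 + C ((ctZ c : ℤ) : ℂ) * X : ℂ[X])) =
      ∏ c ∈ l.cells, (1 + RatFunc.C (((c.2 : ℤ) - (c.1 : ℤ) : ℤ) : ℂ) * RatFunc.X) := by
    intro l
    rw [_root_.map_prod]
    refine Finset.prod_congr rfl fun c _ => ?_
    rw [_root_.map_add, _root_.map_one, _root_.map_mul, RatFunc.algebraMap_C, RatFunc.algebraMap_X]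
    rfl
  have hφD : ∀ l : YoungDiagram,
      (algebraMap ℂ[X] (RatFunc ℂ)) (∏ c ∈ l.cells, (1 - C ((ctZ c : ℂ) + δ) * X : ℂ[X])) =
      ∏ c ∈ l.cells,
        (1 - RatFunc.C ((((c.2 : ℤ) - (c.1 : ℤ) : ℤ) : ℂ) + δ) * RatFunc.X) := by
    intro l
    rw [_root_.map_prod]
    refine Finset.prod_congr rfl fun c _ => ?_
    rw [_root_.map_sub, _root_.map_one, _root_.map_mul, RatFunc.algebraMap_C, RatFunc.algebraMap_X]
    rfl
  have hφDne : ∀ l : YoungDiagram,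
      (algebraMap ℂ[X] (RatFunc ℂ)) (∏ c ∈ l.cells, (1 - C ((ctZ c : ℂ) + δ) * X : ℂ[X])) ≠ 0 := by
    intro l h0
    exact hDne l (hinj (by rw [h0, _root_.map_zero]))
  have heq' :
      (algebraMap ℂ[X] (RatFunc ℂ)) (∏ c ∈ lL.cells, (1 + C ((ctZ c : ℤ) : ℂ) * X : ℂ[X])) /
        (algebraMap ℂ[X] (RatFunc ℂ)) (∏ c ∈ lR.cells, (1 - C ((ctZ c : ℂ) + δ) * X : ℂ[X])) =
      (algebraMap ℂ[X] (RatFunc ℂ)) (∏ c ∈ mL.cells, (1 + C ((ctZ c : ℤ) : ℂ) * X : ℂ[X])) /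
        (algebraMap ℂ[X] (RatFunc ℂ)) (∏ c ∈ mR.cells, (1 - C ((ctZ c : ℂ) + δ) * X : ℂ[X])) := by
    rw [hφA, hφA, hφD, hφD]
    exact heq
  rw [div_eq_div_iff (hφDne lR) (hφDne mR), ← map_mul, ← map_mul] at heq'
  have hpoly :
      (∏ c ∈ lL.cells, (1 + C ((ctZ c : ℤ) : ℂ) * X : ℂ[X])) *
        (∏ c ∈ mR.cells, (1 - C ((ctZ c : ℂ) + δ) * X : ℂ[X])) =
      (∏ c ∈ mL.cells, (1 + C ((ctZ c : ℤ) : ℂ) * X : ℂ[X])) *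
        (∏ c ∈ lR.cells, (1 - C ((ctZ c : ℂ) + δ) * X : ℂ[X])) := hinj heq'
  have hAD :
      (∏ c ∈ lL.cells, (1 + C ((ctZ c : ℤ) : ℂ) * X : ℂ[X])).roots +
        (∏ c ∈ mR.cells, (1 - C ((ctZ c : ℂ) + δ) * X : ℂ[X])).roots =
      (∏ c ∈ mL.cells, (1 + C ((ctZ c : ℤ) : ℂ) * X : ℂ[X])).roots +
        (∏ c ∈ lR.cells, (1 - C ((ctZ c : ℂ) + δ) * X : ℂ[X])).roots := by
    rw [← roots_mul (mul_ne_zero (hAne lL) (hDne mR)),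
      ← roots_mul (mul_ne_zero (hAne mL) (hDne lR)), hpoly]
  set p : ℂ → Prop := fun ρ => ‖ρ⁻¹‖ ≤ (r : ℝ) - 1 with hp
  have hrootsA : ∀ {l : YoungDiagram}, l.cells.card ≤ r →
      ∀ ρ ∈ (∏ c ∈ l.cells, (1 + C ((ctZ c : ℤ) : ℂ) * X : ℂ[X])).roots, p ρ := by
    intro l hc ρ hρ
    rw [rootsPA] at hρ
    rw [Multiset.mem_bind] at hρ
    obtain ⟨u, hu, hρu⟩ := hρ
    by_cases h0 : ctZ u = 0
    · rw [if_pos h0] at hρu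
      simp at hρu
    · rw [if_neg h0] at hρu
      rw [Multiset.mem_singleton] at hρu
      subst hρu
      rw [hp]
      simp only [inv_neg, inv_inv, norm_neg]
      exact abs_ct_le hc hu
  have hrootsD : ∀ {l : YoungDiagram}, l.cells.card ≤ s →
      ∀ ρ ∈ (∏ c ∈ l.cells, (1 - C ((ctZ c : ℂ) + δ) * X : ℂ[X])).roots, ¬ p ρ := by
    intro l hc ρ hρ
    rw [rootsPD δ l (hneR hc)] at hρ
    rw [Multiset.mem_map] at hρ
    obtain ⟨u, hu, hρu⟩ := hρ
    subst hρu
    rw [hp]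
    simp only [inv_inv]
    push_neg
    exact habsR hc u hu
  have hfilter := congrArg (Multiset.filter p) hAD
  rw [Multiset.filter_add, Multiset.filter_add,
    Multiset.filter_eq_self.mpr (hrootsA hcLl),
    Multiset.filter_eq_self.mpr (hrootsA hcLm),
    Multiset.filter_eq_nil.mpr (hrootsD hcRm),
    Multiset.filter_eq_nil.mpr (hrootsD hcRl), add_zero, add_zero] at hfilter
  have hDroots :
      (∏ c ∈ mR.cells, (1 - C ((ctZ c : ℂ) + δ) * X : ℂ[X])).roots =
      (∏ c ∈ lR.cells, (1 - C ((ctZ c : ℂ) + δ) * X : ℂ[X])).roots := by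
    rwa [hfilter, add_right_inj] at hAD
  have hcastinj : Function.Injective (fun k : ℤ => (k : ℂ)) := Int.cast_injective
  have hcontR : contents lR = contents mR := by
    have h1 := congrArg (Multiset.map (fun ρ : ℂ => ρ⁻¹ - δ)) hDroots
    rw [mapback_D δ mR (hneR hcRm), mapback_D δ lR (hneR hcRl)] at h1
    exact Multiset.map_injective hcastinj h1.symm
  have hRR : lR = mR := eq_of_contents_eq hcontR
  have hcardR : lR.cells.card = mR.cells.card := by rw [hRR]
  have htt : t = t' := by
    have h1 : t ≤ s := le_trans ht (min_le_right r s)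
    have h2 : t' ≤ s := le_trans ht' (min_le_right r s)
    omega
  have hcontLnz : (contents lL).filter (· ≠ 0) = (contents mL).filter (· ≠ 0) := by
    have h1 := congrArg (Multiset.map (fun ρ : ℂ => -ρ⁻¹)) hfilter
    rw [mapback_A lL, mapback_A mL] at h1
    exact Multiset.map_injective hcastinj h1
  have hcardL : Multiset.card (contents lL) = Multiset.card (contents mL) := by
    rw [contents, contents, Multiset.card_map, Multiset.card_map]
    show lL.cells.card = mL.cells.card
    omega
  have hcontL : contents lL = contents mL := by
    rw [Multiset.ext]
    intro k
    by_cases hk : k = 0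
    · subst hk
      have e1 := count_add_filter_card (contents lL)
      have e2 := count_add_filter_card (contents mL)
      rw [hcontLnz] at e1
      omega
    · have c1 : Multiset.count k (contents lL) =
          Multiset.count k ((contents lL).filter (· ≠ 0)) := by
        rw [Multiset.count_filter, if_pos hk]
      have c2 : Multiset.count k (contents mL) =
          Multiset.count k ((contents mL).filter (· ≠ 0)) := by
        rw [Multiset.count_filter, if_pos hk]
      rw [c1, c2, hcontLnz]
  exact ⟨htt, eq_of_contents_eq hcontL, hRR⟩
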